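/- Let W = {w_1, ..., w_R} be N-periodic windows with l(w_r) ≤ N/2 for all r, such that for every 0 ≤ m ≤ N/L−1 the matrix A_m = (β_r(m + jN/L))_{r,j} has rank L. If the graph G̃(x, W, L) is connected, then x can be recovered up to a global phase from the magnitude measurements |X_{w_r}(Lm,k)| of its multiple-window STFT; i.e., any y ∈ ℂ^N with the same magnitude measurements satisfies y = e^{iθ} x for some real θ. -/

import Mathlib

set_option linter.unusedSectionVars false


/-- Multiple-window short-time Fourier transform. -/
noncomputable def stft {N : ℕ} [NeZero N] (L : ℕ) (x w : ZMod N → ℂ) (m k : ℕ) : ℂ :=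
  (N : ℂ)⁻¹ * ∑ n : ZMod N, x n * w (((L * m : ℕ) : ZMod N) - n) *
    Complex.exp (-(2 * Real.pi * Complex.I * (k : ℂ) * (n.val : ℂ)) / (N : ℂ))

/-- DFT of the squared magnitudes of a vector: `(1/N) ∑_n |u(n)|² e^{-2πikn/N}`. -/
noncomputable def dftSq {N : ℕ} [NeZero N] (u : ZMod N → ℂ) (k : ℕ) : ℂ :=
  (N : ℂ)⁻¹ * ∑ n : ZMod N, (‖u n‖ ^ 2 : ℝ) *
    Complex.exp (-(2 * Real.pi * Complex.I * (k : ℂ) * (n.val : ℂ)) / (N : ℂ))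


open Complex Finset

variable {N : ℕ} [NeZero N]

noncomputable def zeta (N : ℕ) : ℂ := Complex.exp (-(2 * Real.pi * Complex.I) / N)

lemma zeta_pow (a : ℕ) : zeta N ^ a = Complex.exp (-(2 * Real.pi * Complex.I * a) / N) := by
  rw [zeta, ← Complex.exp_nat_mul]; ring_nf

lemma zeta_pow_N : zeta N ^ N = 1 := by
  have hN : (N : ℂ) ≠ 0 := Nat.cast_ne_zero.2 (NeZero.ne N)
  rw [zeta_pow]
  rw [show -(2 * Real.pi * Complex.I * N) / N = (-1 : ℤ) * (2 * Real.pi * Complex.I) by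
    field_simp; norm_num]
  exact Complex.exp_int_mul_two_pi_mul_I (-1)

lemma zeta_ne_zero : zeta N ≠ 0 := Complex.exp_ne_zero _

lemma zeta_pow_eq_one_iff {a : ℕ} : zeta N ^ a = 1 ↔ (N : ℕ) ∣ a := by
  have hN : (N : ℂ) ≠ 0 := Nat.cast_ne_zero.2 (NeZero.ne N)
  have ht : (2 : ℂ) * Real.pi * Complex.I ≠ 0 := by
    simp [Complex.I_ne_zero, Real.pi_ne_zero, Complex.ofReal_ne_zero]
  rw [zeta_pow, Complex.exp_eq_one_iff]
  constructor
  · rintro ⟨n, hn⟩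
    have h1 : (2 * Real.pi * Complex.I) * (-(a : ℂ) / N) = (2 * Real.pi * Complex.I) * n := by
      rw [mul_comm (n : ℂ) _] at hn
      rw [← hn]; ring
    have h2 : -(a : ℂ) / N = n := mul_left_cancel₀ ht h1
    have h3 : (a : ℂ) = ((-n * N : ℤ) : ℂ) := by
      push_cast
      field_simp at h2
      linear_combination -h2
    have h4 : (a : ℤ) = -n * N := by exact_mod_cast h3
    have : (N : ℤ) ∣ (a : ℤ) := ⟨-n, by linarith⟩
    exact_mod_cast this
  · rintro ⟨c, rfl⟩
    refine ⟨-c, ?_⟩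
    field_simp
    push_cast
    ring

lemma zeta_pow_mod (a : ℕ) : zeta N ^ (a % N) = zeta N ^ a := by
  conv_rhs => rw [← Nat.div_add_mod a N]
  rw [pow_add, pow_mul, zeta_pow_N, one_pow, one_mul]

lemma zeta_pow_inj {a b : ℕ} (ha : a < N) (hb : b < N)
    (h : zeta N ^ a = zeta N ^ b) : a = b := by
  rcases le_or_gt a b with hab | hab
  · have h1 : zeta N ^ a * zeta N ^ (b - a) = zeta N ^ a * 1 := by
      rw [← pow_add, Nat.add_sub_cancel' hab, mul_one, h]
    have h2 := mul_left_cancel₀ (pow_ne_zero a (zeta_ne_zero (N := N))) h1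
    have := Nat.eq_zero_of_dvd_of_lt (zeta_pow_eq_one_iff.1 h2) (by omega)
    omega
  · have h1 : zeta N ^ b * zeta N ^ (a - b) = zeta N ^ b * 1 := by
      rw [← pow_add, Nat.add_sub_cancel' hab.le, mul_one, h]
    have h2 := mul_left_cancel₀ (pow_ne_zero b (zeta_ne_zero (N := N))) h1
    have := Nat.eq_zero_of_dvd_of_lt (zeta_pow_eq_one_iff.1 h2) (by omega)
    omega

lemma zeta_pow_eq_iff {a b : ℕ} : zeta N ^ a = zeta N ^ b ↔ (a : ZMod N) = b := by
  rw [ZMod.natCast_eq_natCast_iff, Nat.ModEq, ← zeta_pow_mod a, ← zeta_pow_mod b]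
  have hN := Nat.pos_of_ne_zero (NeZero.ne N)
  constructor
  · intro h
    exact zeta_pow_inj (Nat.mod_lt a hN) (Nat.mod_lt b hN) h
  · intro h; rw [h]

lemma norm_zeta_pow (a : ℕ) : ‖zeta N ^ a‖ = 1 := by
  rw [zeta_pow, show -(2 * (Real.pi:ℂ) * Complex.I * a) / N
      = ((-(2 * Real.pi * a) / N : ℝ) : ℂ) * Complex.I by push_cast; ring,
    Complex.norm_exp_ofReal_mul_I]

lemma conj_zeta_pow (a : ℕ) : (starRingEnd ℂ) (zeta N ^ a) = (zeta N ^ a)⁻¹ := by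
  exact (Complex.inv_eq_conj (by first | exact norm_zeta_pow a | (rw [← Complex.norm_eq_abs]; exact norm_zeta_pow a))).symm

/-- The character value `e(n) = exp(-2πi n/N)` for `n : ZMod N`. -/
noncomputable def EE {N : ℕ} [NeZero N] (n : ZMod N) : ℂ := zeta N ^ n.val

lemma EE_natCast (j : ℕ) : EE ((j : ZMod N)) = zeta N ^ j := by
  rw [EE, zeta_pow_eq_iff, ZMod.natCast_val, ZMod.cast_id]

lemma EE_add (m n : ZMod N) : EE (m + n) = EE m * EE n := by
  rw [EE, EE, EE, ← pow_add, zeta_pow_eq_iff]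
  push_cast [ZMod.natCast_val]
  simp [ZMod.cast_id]

lemma EE_ne_zero (n : ZMod N) : EE n ≠ 0 := pow_ne_zero _ zeta_ne_zero

lemma EE_inj {m n : ZMod N} (h : EE m = EE n) : m = n := by
  have := zeta_pow_eq_iff.1 h
  rwa [ZMod.natCast_val, ZMod.natCast_val, ZMod.cast_id, ZMod.cast_id] at this

lemma conj_EE_pow (n : ZMod N) (k : ℕ) : (starRingEnd ℂ) (EE n ^ k) = (EE n ^ k)⁻¹ := by
  rw [EE, ← pow_mul, conj_zeta_pow, pow_mul]

lemma EE_pow_N (n : ZMod N) : EE n ^ N = 1 := by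
  rw [EE, ← pow_mul, mul_comm, pow_mul, zeta_pow_N, one_pow]

/-- Geometric-sum orthogonality. -/
lemma geom_orth {M : ℕ} (hM : 0 < M) (z : ℂ) (hz : z ^ M = 1) :
    ∑ k ∈ range M, z ^ k = if z = 1 then (M : ℂ) else 0 := by
  by_cases h1 : z = 1
  · simp [h1]
  · rw [if_neg h1, geom_sum_eq h1, hz, sub_self, zero_div]

lemma orth (n n' : ZMod N) :
    ∑ k ∈ range N, EE n ^ k * (starRingEnd ℂ) (EE n' ^ k) = if n = n' then (N : ℂ) else 0 := by
  have hN := Nat.pos_of_ne_zero (NeZero.ne N)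
  have hkey : ∀ k, EE n ^ k * (starRingEnd ℂ) (EE n' ^ k) = (EE n * (EE n')⁻¹) ^ k := by
    intro k; rw [conj_EE_pow, mul_pow, inv_pow]
  simp_rw [hkey]
  rw [geom_orth hN _ (by rw [mul_pow, inv_pow, EE_pow_N, EE_pow_N, inv_one, mul_one])]
  congr 1
  simp only [eq_iff_iff]
  rw [mul_inv_eq_one₀ (EE_ne_zero n')]
  exact ⟨fun h => EE_inj h, fun h => by rw [h]⟩

lemma norm_sq_complex (z : ℂ) : ((‖z‖ ^ 2 : ℝ) : ℂ) = z * (starRingEnd ℂ) z := by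
  rw [Complex.mul_conj, Complex.normSq_eq_norm_sq]

lemma key_ac (f : ZMod N → ℂ) (s : ZMod N) :
    ∑ k ∈ range N, ((‖∑ n : ZMod N, f n * EE n ^ k‖ ^ 2 : ℝ) : ℂ) * EE s ^ k
      = N * ∑ n : ZMod N, f n * (starRingEnd ℂ) (f (n + s)) := by
  have h1 : ∀ k ∈ range N, ((‖∑ n : ZMod N, f n * EE n ^ k‖ ^ 2 : ℝ) : ℂ) * EE s ^ k
      = ∑ n : ZMod N, ∑ n' : ZMod N,
          f n * (starRingEnd ℂ) (f n') * (EE (n + s) ^ k * (starRingEnd ℂ) (EE n' ^ k)) := by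
    intro k _
    rw [norm_sq_complex, map_sum, sum_mul_sum, sum_mul]
    refine sum_congr rfl fun n _ => ?_
    rw [sum_mul]
    refine sum_congr rfl fun n' _ => ?_
    rw [map_mul, EE_add, mul_pow]
    ring
  rw [sum_congr rfl h1, Finset.sum_comm]
  rw [mul_sum]
  refine sum_congr rfl fun n _ => ?_
  rw [Finset.sum_comm]
  have h2 : ∀ n' : ZMod N,
      ∑ k ∈ range N, f n * (starRingEnd ℂ) (f n') * (EE (n + s) ^ k * (starRingEnd ℂ) (EE n' ^ k))
      = f n * (starRingEnd ℂ) (f n') * (if n + s = n' then (N : ℂ) else 0) := by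
    intro n'
    rw [← mul_sum, orth]
  rw [sum_congr rfl fun n' _ => h2 n']
  simp only [mul_ite, mul_zero]
  rw [Finset.sum_ite_eq (Finset.univ) (n + s) (fun n' => f n * (starRingEnd ℂ) (f n') * N)]
  simp [mul_comm]

lemma autocorr {f g : ZMod N → ℂ}
    (h : ∀ k < N, ‖∑ n : ZMod N, f n * EE n ^ k‖ = ‖∑ n : ZMod N, g n * EE n ^ k‖)
    (s : ZMod N) :
    ∑ n : ZMod N, f n * (starRingEnd ℂ) (f (n + s))
      = ∑ n : ZMod N, g n * (starRingEnd ℂ) (g (n + s)) := by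
  have hN : (N : ℂ) ≠ 0 := Nat.cast_ne_zero.2 (NeZero.ne N)
  refine mul_left_cancel₀ hN ?_
  rw [← key_ac f s, ← key_ac g s]
  exact sum_congr rfl fun k hk => by rw [h k (mem_range.1 hk)]

lemma inv_dft (F : ZMod N → ℂ) (u : ZMod N) :
    ∑ k ∈ range N, (∑ n : ZMod N, F n * EE n ^ k) * (starRingEnd ℂ) (EE u ^ k)
      = N * F u := by
  have h1 : ∀ k ∈ range N, (∑ n : ZMod N, F n * EE n ^ k) * (starRingEnd ℂ) (EE u ^ k)
      = ∑ n : ZMod N, F n * (EE n ^ k * (starRingEnd ℂ) (EE u ^ k)) := by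
    intro k _
    rw [sum_mul]
    exact sum_congr rfl fun n _ => by ring
  rw [sum_congr rfl h1, Finset.sum_comm]
  have h2 : ∀ n : ZMod N,
      ∑ k ∈ range N, F n * (EE n ^ k * (starRingEnd ℂ) (EE u ^ k))
      = F n * (if n = u then (N : ℂ) else 0) := by
    intro n; rw [← mul_sum, orth]
  rw [sum_congr rfl fun n _ => h2 n]
  simp only [mul_ite, mul_zero]
  rw [Finset.sum_ite_eq' Finset.univ u (fun n => F n * N)]
  simp [mul_comm]

lemma alias_dft (P V : ZMod N → ℂ) (c : ZMod N) :
    ∑ k ∈ range N, (∑ t : ZMod N, V t * EE t ^ k) * (∑ n : ZMod N, P n * EE n ^ k)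
        * (starRingEnd ℂ) (EE c ^ k)
      = N * ∑ n : ZMod N, P n * V (c - n) := by
  have h1 : ∀ k ∈ range N, (∑ t : ZMod N, V t * EE t ^ k) * (∑ n : ZMod N, P n * EE n ^ k)
        * (starRingEnd ℂ) (EE c ^ k)
      = ∑ n : ZMod N, ∑ t : ZMod N, P n * V t * (EE (t + n) ^ k * (starRingEnd ℂ) (EE c ^ k)) := by
    intro k _
    rw [sum_mul_sum, sum_mul, Finset.sum_comm]
    refine sum_congr rfl fun n _ => ?_
    rw [sum_mul]
    refine sum_congr rfl fun t _ => ?_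
    rw [EE_add, mul_pow]
    ring
  rw [sum_congr rfl h1, Finset.sum_comm, mul_sum]
  refine sum_congr rfl fun n _ => ?_
  rw [Finset.sum_comm]
  have h2 : ∀ t : ZMod N,
      ∑ k ∈ range N, P n * V t * (EE (t + n) ^ k * (starRingEnd ℂ) (EE c ^ k))
      = P n * V t * (if t + n = c then (N : ℂ) else 0) := by
    intro t; rw [← mul_sum, orth]
  rw [sum_congr rfl fun t _ => h2 t]
  simp only [mul_ite, mul_zero]
  have h3 : ∀ t : ZMod N, t + n = c ↔ t = c - n := by
    intro t; constructor <;> intro h <;> [rw [← h]; rw [h]] <;> ring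
  simp only [h3]
  rw [Finset.sum_ite_eq' Finset.univ (c - n) (fun t => P n * V t * N)]
  simp [mul_comm]

lemma inner_geo (L M : ℕ) (hLM : L * M = N) (hM : 0 < M) (hL : 0 < L)
    (k m₀ : ℕ) (hm₀ : m₀ < M) :
    ∑ m' ∈ range M,
        (starRingEnd ℂ) (EE (((L * m' : ℕ) : ZMod N)) ^ k) * EE (((L * m' : ℕ) : ZMod N)) ^ m₀
      = if k % M = m₀ then (M : ℂ) else 0 := by
  have hterm : ∀ m' : ℕ,
      (starRingEnd ℂ) (EE (((L * m' : ℕ) : ZMod N)) ^ k) * EE (((L * m' : ℕ) : ZMod N)) ^ m₀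
      = (zeta N ^ (L * m₀) * (zeta N ^ (L * k))⁻¹) ^ m' := by
    intro m'
    rw [EE_natCast, ← pow_mul, ← pow_mul, conj_zeta_pow, mul_pow, ← pow_mul, inv_pow, ← pow_mul]
    rw [show L * m' * k = L * k * m' by ring, show L * m' * m₀ = L * m₀ * m' by ring]
    ring
  rw [sum_congr rfl fun m' _ => hterm m']
  have hzM : (zeta N ^ (L * m₀) * (zeta N ^ (L * k))⁻¹) ^ M = 1 := by
    rw [mul_pow, inv_pow, ← pow_mul, ← pow_mul,
      show L * m₀ * M = N * m₀ by rw [← hLM]; ring,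
      show L * k * M = N * k by rw [← hLM]; ring,
      pow_mul, pow_mul, zeta_pow_N, one_pow, one_pow, inv_one, mul_one]
  rw [geom_orth hM _ hzM]
  congr 1
  simp only [eq_iff_iff]
  rw [mul_inv_eq_one₀ (pow_ne_zero _ (zeta_ne_zero (N := N))), zeta_pow_eq_iff, ← hLM,
    ZMod.natCast_eq_natCast_iff]
  have hmm := Nat.mod_eq_of_lt hm₀
  constructor
  · intro h
    have := Nat.ModEq.mul_left_cancel' hL.ne' h
    rw [Nat.ModEq] at this
    omega
  · intro h
    have h2 : m₀ ≡ k [MOD M] := by rw [Nat.ModEq]; omega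
    exact Nat.ModEq.mul_left' L h2

lemma decimate (L M : ℕ) (hLM : L * M = N) (hM : 0 < M) (hL : 0 < L) (G : ℕ → ℂ)
    (H : ∀ m' < M, ∑ k ∈ range N, G k * (starRingEnd ℂ) (EE (((L * m' : ℕ) : ZMod N)) ^ k) = 0)
    (m₀ : ℕ) (hm₀ : m₀ < M) :
    ∑ j ∈ range L, G (m₀ + j * M) = 0 := by
  have hMC : (M : ℂ) ≠ 0 := Nat.cast_ne_zero.2 hM.ne'
  have key : ∑ m' ∈ range M,
      (∑ k ∈ range N, G k * (starRingEnd ℂ) (EE (((L * m' : ℕ) : ZMod N)) ^ k))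
        * EE (((L * m' : ℕ) : ZMod N)) ^ m₀ = 0 := by
    rw [sum_congr rfl fun m' hm' => by rw [H m' (mem_range.1 hm'), zero_mul]]
    simp
  have swap : ∑ m' ∈ range M,
      (∑ k ∈ range N, G k * (starRingEnd ℂ) (EE (((L * m' : ℕ) : ZMod N)) ^ k))
        * EE (((L * m' : ℕ) : ZMod N)) ^ m₀
      = ∑ k ∈ range N, G k * (if k % M = m₀ then (M : ℂ) else 0) := by
    have e1 : ∀ m' ∈ range M,
        (∑ k ∈ range N, G k * (starRingEnd ℂ) (EE (((L * m' : ℕ) : ZMod N)) ^ k))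
          * EE (((L * m' : ℕ) : ZMod N)) ^ m₀
        = ∑ k ∈ range N, G k * ((starRingEnd ℂ) (EE (((L * m' : ℕ) : ZMod N)) ^ k)
            * EE (((L * m' : ℕ) : ZMod N)) ^ m₀) := by
      intro m' _
      rw [sum_mul]
      exact sum_congr rfl fun k _ => by ring
    rw [sum_congr rfl e1, Finset.sum_comm]
    refine sum_congr rfl fun k _ => ?_
    rw [← mul_sum, inner_geo L M hLM hM hL k m₀ hm₀]
  have key2 : ∑ k ∈ range N, G k * (if k % M = m₀ then (M : ℂ) else 0) = 0 := by
    rw [← swap]; exact key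
  have key3 : (∑ k ∈ (range N).filter (fun k => k % M = m₀), G k) * M = 0 := by
    have e : (∑ k ∈ (range N).filter (fun k => k % M = m₀), G k) * M
        = ∑ k ∈ range N, G k * (if k % M = m₀ then (M : ℂ) else 0) := by
      rw [sum_mul, Finset.sum_filter]
      exact sum_congr rfl fun k _ => by by_cases hc : k % M = m₀ <;> simp [hc]
    rw [e]; exact key2
  have key4 : ∑ k ∈ (range N).filter (fun k => k % M = m₀), G k = 0 := by
    rcases mul_eq_zero.1 key3 with h | h
    · exact h
    · exact absurd h hMC
  have hset : (range N).filter (fun k => k % M = m₀) = (range L).image (fun j => m₀ + j * M) := by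
    ext k
    simp only [mem_filter, mem_range, mem_image]
    constructor
    · rintro ⟨hk, hmod⟩
      have e := Nat.div_add_mod k M
      refine ⟨k / M, ?_, ?_⟩
      · by_contra hge
        push_neg at hge
        have h1 : M * L ≤ M * (k / M) := Nat.mul_le_mul_left M hge
        have h2 : M * L = L * M := Nat.mul_comm M L
        omega
      · have h3 : (k / M) * M = M * (k / M) := Nat.mul_comm _ _
        omega
    · rintro ⟨j, hj, rfl⟩
      have h1 : m₀ + j * M < j * M + M := by omega
      have h2 : j * M + M ≤ L * M := by
        have := Nat.mul_le_mul_right M (show j + 1 ≤ L by omega)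
        rwa [add_mul, one_mul] at this
      refine ⟨by omega, by rw [Nat.add_mul_mod_self_right, Nat.mod_eq_of_lt hm₀]⟩
  rw [hset] at key4
  rw [← key4, Finset.sum_image]
  intro j _ j' _ h
  have h2 : j * M = j' * M := by simp only at h; omega
  exact Nat.eq_of_mul_eq_mul_right hM h2

lemma exp_eq_EE (k : ℕ) (n : ZMod N) :
    Complex.exp (-(2 * Real.pi * Complex.I * (k : ℂ) * (n.val : ℂ)) / N) = EE n ^ k := by
  rw [EE, ← pow_mul, zeta_pow]
  congr 1
  push_cast
  ring

lemma stft_eq (L : ℕ) (x w : ZMod N → ℂ) (m k : ℕ) :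
    stft L x w m k
      = (N : ℂ)⁻¹ * ∑ n : ZMod N, x n * w (((L * m : ℕ) : ZMod N) - n) * EE n ^ k := by
  rw [stft]
  congr 1
  exact sum_congr rfl fun n _ => by rw [exp_eq_EE]

lemma dftSq_eq (u : ZMod N → ℂ) (k : ℕ) :
    dftSq u k = (N : ℂ)⁻¹ * ∑ n : ZMod N, ((‖u n‖ ^ 2 : ℝ) : ℂ) * EE n ^ k := by
  rw [dftSq]
  congr 1
  exact sum_congr rfl fun n _ => by rw [exp_eq_EE]

/-- If the window is supported on `[a, a+l-1]` with `l ≤ N/2`, then the product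
`w(u+s) * conj(w u)` with `s = l-1` vanishes unless `u = a`. -/
lemma window_pair (w : ZMod N → ℂ) (a : ZMod N) (l : ℕ) (hl1 : 1 ≤ l) (hlN : l ≤ N / 2)
    (hsupp : ∀ n : ZMod N, (∀ j < l, n ≠ a + (j : ZMod N)) → w n = 0)
    (u : ZMod N) (hu : u ≠ a) :
    w (u + ((l - 1 : ℕ) : ZMod N)) * (starRingEnd ℂ) (w u) = 0 := by
  have hN0 : 0 < N := Nat.pos_of_ne_zero (NeZero.ne N)
  have h2l : 2 * l ≤ N := by
    have := (Nat.le_div_iff_mul_le (by norm_num : 0 < 2)).1 hlN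
    omega
  by_cases h1 : w u = 0
  · simp [h1]
  by_cases h2 : w (u + ((l - 1 : ℕ) : ZMod N)) = 0
  · simp [h2]
  exfalso
  have e1 : ∃ j < l, u = a + (j : ZMod N) := by
    by_contra hc; push_neg at hc
    exact h1 (hsupp u fun j hj => hc j hj)
  have e2 : ∃ j < l, u + ((l - 1 : ℕ) : ZMod N) = a + (j : ZMod N) := by
    by_contra hc; push_neg at hc
    exact h2 (hsupp _ fun j hj => hc j hj)
  obtain ⟨j, hj, rfl⟩ := e1
  obtain ⟨j', hj', hjj⟩ := e2
  have hcast : ((j + (l - 1) : ℕ) : ZMod N) = ((j' : ℕ) : ZMod N) := by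
    push_cast
    have := hjj
    rw [add_assoc] at this
    exact add_left_cancel this
  have hmeq := (ZMod.natCast_eq_natCast_iff _ _ _).1 hcast
  rw [Nat.ModEq, Nat.mod_eq_of_lt (by omega), Nat.mod_eq_of_lt (by omega)] at hmeq
  have hj0 : j = 0 := by omega
  exact hu (by rw [hj0]; simp)

/-- Single-term reduction of the autocorrelation at the extreme shift. -/
lemma ac_single (w : ZMod N → ℂ) (a : ZMod N) (l : ℕ) (hl1 : 1 ≤ l) (hlN : l ≤ N / 2)
    (hsupp : ∀ n : ZMod N, (∀ j < l, n ≠ a + (j : ZMod N)) → w n = 0)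
    (x : ZMod N → ℂ) (c : ZMod N) :
    ∑ n : ZMod N, (x n * w (c - n)) *
        (starRingEnd ℂ) (x (n + ((l - 1 : ℕ) : ZMod N)) * w (c - (n + ((l - 1 : ℕ) : ZMod N))))
      = x (c - a - ((l - 1 : ℕ) : ZMod N)) * (starRingEnd ℂ) (x (c - a)) *
          (w (a + ((l - 1 : ℕ) : ZMod N)) * (starRingEnd ℂ) (w a)) := by
  set s : ZMod N := ((l - 1 : ℕ) : ZMod N) with hs
  rw [← Finset.sum_subset (Finset.subset_univ {c - a - s})]
  · rw [Finset.sum_singleton]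
    have e2 : c - a - s + s = c - a := by ring
    have e1 : c - (c - a - s) = a + s := by ring
    have e3 : c - (c - a) = a := by ring
    rw [map_mul, e2, e1, e3]
    ring
  · intro b _ hb
    have hb' : b ≠ c - a - s := by simpa using hb
    have hu : c - b - s ≠ a := fun h => hb' (by rw [← h]; ring)
    have e4 : c - (b + s) = c - b - s := by ring
    rw [map_mul, e4]
    have hzero := window_pair w a l hl1 hlN hsupp (c - b - s) hu
    rw [← hs, show c - b - s + s = c - b from by ring] at hzero
    calc x b * w (c - b) * ((starRingEnd ℂ) (x (b + s)) * (starRingEnd ℂ) (w (c - b - s)))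
        = x b * (starRingEnd ℂ) (x (b + s)) *
            (w (c - b) * (starRingEnd ℂ) (w (c - b - s))) := by ring
      _ = 0 := by rw [hzero, mul_zero]

lemma phase_step {x1 x2 y1 y2 : ℂ} (h1 : x1 ≠ 0) (h2 : x2 ≠ 0)
    (hn1 : ‖x1‖ = ‖y1‖) (hxy : y2 * (starRingEnd ℂ) y1 = x2 * (starRingEnd ℂ) x1) :
    y2 / x2 = y1 / x1 := by
  have hy1 : y1 ≠ 0 := by
    intro h
    rw [h, norm_zero, norm_eq_zero] at hn1
    exact h1 hn1
  have e1 : y1 * (starRingEnd ℂ) y1 = x1 * (starRingEnd ℂ) x1 := by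
    rw [← norm_sq_complex, ← norm_sq_complex, hn1]
  have hc1 : (starRingEnd ℂ) x1 ≠ 0 := by simpa using h1
  have key : y2 * x1 * (starRingEnd ℂ) x1 = y1 * x2 * (starRingEnd ℂ) x1 := by
    linear_combination y1 * hxy - y2 * e1 + y2 * x1 * (0 : ℂ)
  have key2 : y2 * x1 = y1 * x2 := mul_right_cancel₀ hc1 key
  rw [div_eq_div_iff h2 h1]
  exact key2

lemma walk_eq {V : Type*} {G : SimpleGraph V} (c : V → ℂ)
    (h : ∀ u v, G.Adj u v → c u = c v) {u v : V} (p : G.Walk u v) : c u = c v := by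
  induction p with
  | nil => rfl
  | cons hadj p ih => exact (h _ _ hadj).trans ih

lemma mag_eq {Rn L : ℕ} (hL : 0 < L) (hdvd : L ∣ N) (w : Fin Rn → ZMod N → ℂ)
    (hrank : ∀ m < N / L,
      Matrix.rank (Matrix.of fun (r : Fin Rn) (j : Fin L) =>
        dftSq (w r) (m + j.1 * (N / L))) = L)
    (x y : ZMod N → ℂ)
    (hPzero : ∀ r : Fin Rn, ∀ m < N / L,
      ∑ n : ZMod N, ((‖x n‖ ^ 2 - ‖y n‖ ^ 2 : ℝ) : ℂ) *
        ((‖w r (((L * m : ℕ) : ZMod N) - n)‖ ^ 2 : ℝ) : ℂ) = 0) :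
    ∀ u : ZMod N, ‖x u‖ = ‖y u‖ := by
  have hN0 : 0 < N := Nat.pos_of_ne_zero (NeZero.ne N)
  have hNC : (N : ℂ) ≠ 0 := Nat.cast_ne_zero.2 (NeZero.ne N)
  have hLM : L * (N / L) = N := Nat.mul_div_cancel' hdvd
  have hM : 0 < N / L := Nat.div_pos (Nat.le_of_dvd hN0 hdvd) hL
  set P : ZMod N → ℂ := fun n => ((‖x n‖ ^ 2 - ‖y n‖ ^ 2 : ℝ) : ℂ) with hP
  set B : Fin Rn → ℕ → ℂ :=
    fun r k => ∑ t : ZMod N, ((‖w r t‖ ^ 2 : ℝ) : ℂ) * EE t ^ k with hB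
  set Q : ℕ → ℂ := fun k => ∑ n : ZMod N, P n * EE n ^ k with hQ
  have halias : ∀ r : Fin Rn, ∀ m' < N / L,
      ∑ k ∈ range N, B r k * Q k *
        (starRingEnd ℂ) (EE (((L * m' : ℕ) : ZMod N)) ^ k) = 0 := by
    intro r m' hm'
    have h := alias_dft P (fun t => ((‖w r t‖ ^ 2 : ℝ) : ℂ)) (((L * m' : ℕ) : ZMod N))
    rw [hPzero r m' hm', mul_zero] at h
    exact h
  have hQ0 : ∀ k < N, Q k = 0 := by
    intro k hk
    have hm₀ : k % (N / L) < N / L := Nat.mod_lt _ hM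
    have hdec : ∀ r : Fin Rn, ∑ j ∈ range L,
        B r (k % (N / L) + j * (N / L)) * Q (k % (N / L) + j * (N / L)) = 0 :=
      fun r => decimate L (N / L) hLM hM hL (fun k => B r k * Q k) (halias r) _ hm₀
    set A : Matrix (Fin Rn) (Fin L) ℂ :=
      Matrix.of fun r j => dftSq (w r) (k % (N / L) + j.1 * (N / L)) with hA
    have hv : A.mulVecLin (fun j : Fin L => Q (k % (N / L) + j.1 * (N / L))) = 0 := by
      funext r
      rw [Matrix.mulVecLin_apply]
      show ∑ j : Fin L, A r j * Q (k % (N / L) + j.1 * (N / L)) = 0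
      have e1 : ∀ j : Fin L, A r j * Q (k % (N / L) + j.1 * (N / L))
          = (N : ℂ)⁻¹ * (B r (k % (N / L) + j.1 * (N / L)) * Q (k % (N / L) + j.1 * (N / L))) := by
        intro j
        have : A r j = (N : ℂ)⁻¹ * B r (k % (N / L) + j.1 * (N / L)) := by
          show dftSq (w r) (k % (N / L) + j.1 * (N / L)) = _
          rw [dftSq_eq]
        rw [this]; ring
      rw [Finset.sum_congr rfl fun j _ => e1 j, ← mul_sum]
      rw [Fin.sum_univ_eq_sum_range
        (fun j => B r (k % (N / L) + j * (N / L)) * Q (k % (N / L) + j * (N / L))) L]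
      rw [hdec r, mul_zero]
    have hker : LinearMap.ker A.mulVecLin = ⊥ := by
      have h1 := LinearMap.finrank_range_add_finrank_ker A.mulVecLin
      have h2 : Module.finrank ℂ (LinearMap.range A.mulVecLin) = L := hrank (k % (N / L)) hm₀
      have h3 : Module.finrank ℂ (Fin L → ℂ) = L := by simp
      rw [h2, h3] at h1
      have h4 : Module.finrank ℂ (LinearMap.ker A.mulVecLin) = 0 := by omega
      exact Submodule.finrank_eq_zero.1 h4
    have hv0 : (fun j : Fin L => Q (k % (N / L) + j.1 * (N / L))) = 0 := by
      have hm : (fun j : Fin L => Q (k % (N / L) + j.1 * (N / L))) ∈ LinearMap.ker A.mulVecLin :=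
        LinearMap.mem_ker.2 hv
      rw [hker] at hm
      exact Submodule.mem_bot ℂ |>.1 hm
    have hjk : k / (N / L) < L := by
      have e := Nat.div_add_mod k (N / L)
      by_contra hge
      push_neg at hge
      have h5 : (N / L) * L ≤ (N / L) * (k / (N / L)) := Nat.mul_le_mul_left _ hge
      have h6 : (N / L) * L = N := by rw [mul_comm]; exact hLM
      omega
    have := congrFun hv0 ⟨k / (N / L), hjk⟩
    simpa [Nat.mod_add_div' k (N / L)] using this
  intro u
  have h1 := inv_dft P u
  have h2 : ∑ k ∈ range N, (∑ n : ZMod N, P n * EE n ^ k) * (starRingEnd ℂ) (EE u ^ k)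
      = 0 := by
    rw [sum_congr rfl fun k hk => by rw [show (∑ n : ZMod N, P n * EE n ^ k) = Q k from rfl,
      hQ0 k (mem_range.1 hk), zero_mul]]
    simp
  rw [h2] at h1
  have hPu : P u = 0 := by
    rcases mul_eq_zero.1 h1.symm with h | h
    · exact absurd h hNC
    · exact h
  have hre : ‖x u‖ ^ 2 - ‖y u‖ ^ 2 = 0 := by
    simp only [hP] at hPu
    exact_mod_cast hPu
  have := Real.sqrt_sq (norm_nonneg (x u))
  rw [← Real.sqrt_sq (norm_nonneg (x u)), ← Real.sqrt_sq (norm_nonneg (y u))]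
  congr 1
  linarith

/-- Main sufficiency theorem: if each window `w_r` has supporting length `l_r ≤ N/2`
(support exactly `[a_r, a_r + l_r - 1] + Nℤ`), each matrix `A_m` has rank `L`, and the
graph `G̃(x, W, L)` is connected, then `x` is determined up to a global phase by the
magnitudes of its multiple-window STFT. -/
theorem stmt10 (N L R : ℕ) [NeZero N] (hL : 0 < L) (hR : 0 < R) (hdvd : L ∣ N)
    (w : Fin R → ZMod N → ℂ) (a : Fin R → ZMod N) (l : Fin R → ℕ)
    (hl1 : ∀ r, 1 ≤ l r) (hlN : ∀ r, l r ≤ N / 2)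
    (ha : ∀ r, w r (a r) ≠ 0) (hb : ∀ r, w r (a r + ((l r - 1 : ℕ) : ZMod N)) ≠ 0)
    (hsupp : ∀ r, ∀ n : ZMod N, (∀ j < l r, n ≠ a r + (j : ZMod N)) → w r n = 0)
    (hrank : ∀ m < N / L,
      Matrix.rank (Matrix.of fun (r : Fin R) (j : Fin L) =>
        dftSq (w r) (m + j.1 * (N / L))) = L)
    (x : ZMod N → ℂ)
    (hconn : (SimpleGraph.fromRel (fun n n' : {n : ZMod N // x n ≠ 0} =>
      ∃ m < N / L, ∃ r : Fin R,
        (n.1 = ((L * m : ℕ) : ZMod N) - a r ∨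
          n.1 = ((L * m : ℕ) : ZMod N) - a r - ((l r - 1 : ℕ) : ZMod N)) ∧
        (n'.1 = ((L * m : ℕ) : ZMod N) - a r ∨
          n'.1 = ((L * m : ℕ) : ZMod N) - a r - ((l r - 1 : ℕ) : ZMod N)))).Connected) :
    ∀ y : ZMod N → ℂ,
      (∀ r : Fin R, ∀ m < N / L, ∀ k < N,
        ‖stft L y (w r) m k‖ = ‖stft L x (w r) m k‖) →
      ∃ θ : ℝ, y = fun n => Complex.exp (Complex.I * θ) * x n := by
  intro y hmeas
  have hN0 : 0 < N := Nat.pos_of_ne_zero (NeZero.ne N)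
  have hNC : (N : ℂ) ≠ 0 := Nat.cast_ne_zero.2 (NeZero.ne N)
  -- Step 0: normalized measurements
  have hnorm : ∀ (r : Fin R), ∀ m < N / L, ∀ k < N,
      ‖∑ n : ZMod N, y n * w r (((L * m : ℕ) : ZMod N) - n) * EE n ^ k‖
        = ‖∑ n : ZMod N, x n * w r (((L * m : ℕ) : ZMod N) - n) * EE n ^ k‖ := by
    intro r m hm k hk
    have h := hmeas r m hm k hk
    rw [stft_eq, stft_eq, norm_mul, norm_mul] at h
    exact mul_left_cancel₀ (by simp; exact NeZero.ne N : ‖(N : ℂ)⁻¹‖ ≠ 0) h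
  -- Step 1: autocorrelations agree
  have hAC : ∀ (r : Fin R), ∀ m < N / L, ∀ s : ZMod N,
      ∑ n : ZMod N, (y n * w r (((L * m : ℕ) : ZMod N) - n)) *
          (starRingEnd ℂ) (y (n + s) * w r (((L * m : ℕ) : ZMod N) - (n + s)))
        = ∑ n : ZMod N, (x n * w r (((L * m : ℕ) : ZMod N) - n)) *
          (starRingEnd ℂ) (x (n + s) * w r (((L * m : ℕ) : ZMod N) - (n + s))) :=
    fun r m hm s =>
      autocorr (f := fun n => y n * w r (((L * m : ℕ) : ZMod N) - n))
        (g := fun n => x n * w r (((L * m : ℕ) : ZMod N) - n))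
        (fun k hk => hnorm r m hm k hk) s
  -- Step 2: shift-0 autocorrelation
  have hPzero : ∀ r : Fin R, ∀ m < N / L,
      ∑ n : ZMod N, ((‖x n‖ ^ 2 - ‖y n‖ ^ 2 : ℝ) : ℂ) *
        ((‖w r (((L * m : ℕ) : ZMod N) - n)‖ ^ 2 : ℝ) : ℂ) = 0 := by
    intro r m hm
    have h0 := hAC r m hm 0
    simp only [add_zero] at h0
    have ident : ∀ (u : ZMod N → ℂ) (n : ZMod N),
        (u n * w r (((L * m : ℕ) : ZMod N) - n)) *
          (starRingEnd ℂ) (u n * w r (((L * m : ℕ) : ZMod N) - n))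
        = ((‖u n‖ ^ 2 : ℝ) : ℂ) * ((‖w r (((L * m : ℕ) : ZMod N) - n)‖ ^ 2 : ℝ) : ℂ) := by
      intro u n
      rw [← norm_sq_complex, norm_mul]
      push_cast; ring
    rw [sum_congr rfl fun n _ => ident y n, sum_congr rfl fun n _ => ident x n] at h0
    have e : ∀ n : ZMod N, ((‖x n‖ ^ 2 - ‖y n‖ ^ 2 : ℝ) : ℂ) *
        ((‖w r (((L * m : ℕ) : ZMod N) - n)‖ ^ 2 : ℝ) : ℂ)
        = ((‖x n‖ ^ 2 : ℝ) : ℂ) * ((‖w r (((L * m : ℕ) : ZMod N) - n)‖ ^ 2 : ℝ) : ℂ)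
          - ((‖y n‖ ^ 2 : ℝ) : ℂ) * ((‖w r (((L * m : ℕ) : ZMod N) - n)‖ ^ 2 : ℝ) : ℂ) := by
      intro n; push_cast; ring
    rw [sum_congr rfl fun n _ => e n, Finset.sum_sub_distrib, ← h0, sub_self]
  -- Step 3: equal magnitudes everywhere
  have hmag : ∀ u : ZMod N, ‖x u‖ = ‖y u‖ := mag_eq hL hdvd w hrank x y hPzero
  -- Step 4: edge phase relations
  have hrel : ∀ (m : ℕ), m < N / L → ∀ r : Fin R,
      y (((L * m : ℕ) : ZMod N) - a r - ((l r - 1 : ℕ) : ZMod N)) *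
          (starRingEnd ℂ) (y (((L * m : ℕ) : ZMod N) - a r))
        = x (((L * m : ℕ) : ZMod N) - a r - ((l r - 1 : ℕ) : ZMod N)) *
          (starRingEnd ℂ) (x (((L * m : ℕ) : ZMod N) - a r)) := by
    intro m hm r
    have h := hAC r m hm ((l r - 1 : ℕ) : ZMod N)
    rw [ac_single (w r) (a r) (l r) (hl1 r) (hlN r) (hsupp r) y,
        ac_single (w r) (a r) (l r) (hl1 r) (hlN r) (hsupp r) x] at h
    have hW : w r (a r + ((l r - 1 : ℕ) : ZMod N)) * (starRingEnd ℂ) (w r (a r)) ≠ 0 :=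
      mul_ne_zero (hb r) (by simpa using ha r)
    exact mul_right_cancel₀ hW h
  -- Step 5: phase is constant on the graph
  have hadj : ∀ u v : {n : ZMod N // x n ≠ 0},
      (SimpleGraph.fromRel (fun n n' : {n : ZMod N // x n ≠ 0} =>
        ∃ m < N / L, ∃ r : Fin R,
          (n.1 = ((L * m : ℕ) : ZMod N) - a r ∨
            n.1 = ((L * m : ℕ) : ZMod N) - a r - ((l r - 1 : ℕ) : ZMod N)) ∧
          (n'.1 = ((L * m : ℕ) : ZMod N) - a r ∨
            n'.1 = ((L * m : ℕ) : ZMod N) - a r - ((l r - 1 : ℕ) : ZMod N)))).Adj u v →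
      y u.1 / x u.1 = y v.1 / x v.1 := by
    have hmain : ∀ p q : {n : ZMod N // x n ≠ 0}, p.1 ≠ q.1 →
        (∃ m < N / L, ∃ r : Fin R,
          (p.1 = ((L * m : ℕ) : ZMod N) - a r ∨
            p.1 = ((L * m : ℕ) : ZMod N) - a r - ((l r - 1 : ℕ) : ZMod N)) ∧
          (q.1 = ((L * m : ℕ) : ZMod N) - a r ∨
            q.1 = ((L * m : ℕ) : ZMod N) - a r - ((l r - 1 : ℕ) : ZMod N))) →
        y p.1 / x p.1 = y q.1 / x q.1 := by
      rintro p q hpq ⟨m, hm, r, hp, hq⟩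
      have hkey := hrel m hm r
      rcases hp with hp | hp <;> rcases hq with hq | hq
      · exact absurd (hp.trans hq.symm) hpq
      · -- p = n₁, q = n₂
        rw [hp, hq]
        have hkey' : y (((L * m : ℕ) : ZMod N) - a r) *
            (starRingEnd ℂ) (y (((L * m : ℕ) : ZMod N) - a r - ((l r - 1 : ℕ) : ZMod N)))
            = x (((L * m : ℕ) : ZMod N) - a r) *
            (starRingEnd ℂ) (x (((L * m : ℕ) : ZMod N) - a r - ((l r - 1 : ℕ) : ZMod N))) := by
          have := congrArg (starRingEnd ℂ) hkey
          simp only [map_mul, Complex.conj_conj] at this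
          linear_combination this
        have h2 : x q.1 ≠ 0 := q.2
        rw [hq] at h2
        exact phase_step h2 (hp ▸ p.2) (hmag _) hkey'
      · -- p = n₂, q = n₁
        rw [hp, hq]
        have h2 : x q.1 ≠ 0 := q.2
        rw [hq] at h2
        exact phase_step h2 (hp ▸ p.2) (hmag _) hkey
      · exact absurd (hp.trans hq.symm) hpq
    intro u v huv
    rw [SimpleGraph.fromRel_adj] at huv
    obtain ⟨hne, hcase⟩ := huv
    have hne' : u.1 ≠ v.1 := fun h => hne (Subtype.ext h)
    rcases hcase with h | h
    · exact hmain u v hne' h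
    · exact (hmain v u (Ne.symm hne') h).symm
  obtain ⟨n₀⟩ := hconn.nonempty
  have hzn : ‖y n₀.1 / x n₀.1‖ = 1 := by
    rw [norm_div, ← hmag n₀.1, div_self (norm_ne_zero_iff.2 n₀.2)]
  refine ⟨(y n₀.1 / x n₀.1).arg, funext fun n => ?_⟩
  show y n = Complex.exp (Complex.I * (y n₀.1 / x n₀.1).arg) * x n
  by_cases hxn : x n = 0
  · have h1 : ‖y n‖ = 0 := by rw [← hmag n, hxn, norm_zero]
    rw [norm_eq_zero.1 h1, hxn, mul_zero]
  · have hreach := hconn.preconnected ⟨n, hxn⟩ n₀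
    obtain ⟨pwalk⟩ := hreach
    have hconst := walk_eq (fun u : {n : ZMod N // x n ≠ 0} => y u.1 / x u.1) hadj pwalk
    have hexp : Complex.exp (Complex.I * (y n₀.1 / x n₀.1).arg) = y n₀.1 / x n₀.1 := by
      have h2 := Complex.norm_mul_exp_arg_mul_I (y n₀.1 / x n₀.1)
      rw [show ((‖y n₀.1 / x n₀.1‖ : ℝ) : ℂ) = 1 by
        rw [hzn]; norm_num, one_mul] at h2
      rw [mul_comm]
      exact h2
    have hconst' : y n / x n = y n₀.1 / x n₀.1 := hconst
    rw [hexp, ← hconst']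
    field_simp
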